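/- Holomorphic Gauss map implies harmonicity (local form): Let U ⊆ ℂ be an open set and let x₁, …, x_n : U → ℝ be twice continuously differentiable functions. For z = u + iv define f_i(z) = ∂x_i/∂u (z) − i·∂x_i/∂v (z). Assume that Σ_{i=1}^{n} f_i(z)² = 0 for all z ∈ U, that f_n(z) ≠ 0 for all z ∈ U, and that each quotient f_i/f_n is holomorphic on U. Then every x_i is harmonic on U, i.e., ∂²x_i/∂u² + ∂²x_i/∂v² = 0 on U. -/

import Mathlib

open Complex


lemma aux_dbar (U : Set ℂ) (hU : IsOpen U) (X : ℂ → ℝ) (hX : ContDiffOn ℝ 2 X U)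
    (F : ℂ → ℂ)
    (hFdef : ∀ w, F w = ((fderiv ℝ X w 1 : ℝ) : ℂ)
      - Complex.I * ((fderiv ℝ X w Complex.I : ℝ) : ℂ))
    (z : ℂ) (hz : z ∈ U) :
    DifferentiableAt ℝ F z ∧
      fderiv ℝ F z 1 + Complex.I * fderiv ℝ F z Complex.I
        = ((fderiv ℝ (fun w => fderiv ℝ X w 1) z 1
            + fderiv ℝ (fun w => fderiv ℝ X w Complex.I) z Complex.I : ℝ) : ℂ) := by
  have hz' : U ∈ nhds z := hU.mem_nhds hz
  have hCA : ContDiffAt ℝ 2 X z := hX.contDiffAt hz'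
  have hF' : ContDiffAt ℝ 1 (fderiv ℝ X) z := hCA.fderiv_right (by norm_num)
  have hB : HasFDerivAt (fderiv ℝ X) (fderiv ℝ (fderiv ℝ X) z) z :=
    (hF'.differentiableAt one_ne_zero).hasFDerivAt
  set B := fderiv ℝ (fderiv ℝ X) z with hBdef
  have hev : ∀ᶠ y in nhds z, HasFDerivAt X (fderiv ℝ X y) y := by
    filter_upwards [hz'] with y hy using
      ((hX.differentiableOn (by norm_num)).differentiableAt (hU.mem_nhds hy)).hasFDerivAt
  have hsymm : B 1 Complex.I = B Complex.I 1 :=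
    second_derivative_symmetric_of_eventually hev hB 1 Complex.I
  have happ : ∀ c : ℂ, HasFDerivAt (fun w => fderiv ℝ X w c)
      ((ContinuousLinearMap.apply ℝ ℝ c).comp B) z :=
    fun c => (ContinuousLinearMap.apply ℝ ℝ c).hasFDerivAt.comp z hB
  have hD : HasFDerivAt F
      ((Complex.ofRealCLM.comp ((ContinuousLinearMap.apply ℝ ℝ (1:ℂ)).comp B))
        - Complex.I • (Complex.ofRealCLM.comp
            ((ContinuousLinearMap.apply ℝ ℝ Complex.I).comp B))) z := by
    have h1 := Complex.ofRealCLM.hasFDerivAt.comp z (happ 1)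
    have h2 := (Complex.ofRealCLM.hasFDerivAt.comp z (happ Complex.I)).const_mul Complex.I
    have h3 := h1.sub h2
    have hFun : F = fun w => ((fderiv ℝ X w 1 : ℝ) : ℂ)
        - Complex.I * ((fderiv ℝ X w Complex.I : ℝ) : ℂ) := funext hFdef
    rw [hFun]
    exact h3
  refine ⟨hD.differentiableAt, ?_⟩
  rw [hD.fderiv, (happ 1).fderiv, (happ Complex.I).fderiv]
  simp only [ContinuousLinearMap.sub_apply, ContinuousLinearMap.smul_apply,
    ContinuousLinearMap.comp_apply, ContinuousLinearMap.apply_apply,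
    Complex.ofRealCLM_apply, smul_eq_mul]
  have hsymm' : ((B 1 Complex.I : ℝ) : ℂ) = ((B Complex.I 1 : ℝ) : ℂ) := by
    rw [hsymm]
  push_cast
  linear_combination (-Complex.I) * hsymm' + (-((B Complex.I Complex.I : ℝ) : ℂ)) * Complex.I_sq

theorem stmt_15 (U : Set ℂ) (hU : IsOpen U) (n : ℕ) (hn : 1 ≤ n)
    (x : Fin n → ℂ → ℝ) (hx : ∀ i, ContDiffOn ℝ 2 (x i) U)
    (f : Fin n → ℂ → ℂ)
    (hf : ∀ i z, f i z
      = ((fderiv ℝ (x i) z 1 : ℝ) : ℂ)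
        - Complex.I * ((fderiv ℝ (x i) z Complex.I : ℝ) : ℂ))
    (hiso : ∀ z ∈ U, ∑ i, (f i z) ^ 2 = 0)
    (hlast : ∀ z ∈ U, f ⟨n - 1, by omega⟩ z ≠ 0)
    (hquot : ∀ i, DifferentiableOn ℂ (fun z => f i z / f ⟨n - 1, by omega⟩ z) U) :
    ∀ i, ∀ z ∈ U,
      fderiv ℝ (fun w => fderiv ℝ (x i) w 1) z 1
        + fderiv ℝ (fun w => fderiv ℝ (x i) w Complex.I) z Complex.I = 0 := by
  intro i₀ z hz
  set N : Fin n := ⟨n - 1, by omega⟩ with hN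
  -- the Laplacian values
  set A : Fin n → ℝ := fun j => fderiv ℝ (fun w => fderiv ℝ (x j) w 1) z 1
    + fderiv ℝ (fun w => fderiv ℝ (x j) w Complex.I) z Complex.I with hA
  have hzn : U ∈ nhds z := hU.mem_nhds hz
  have hfNz : f N z ≠ 0 := hlast z hz
  -- key identity : ↑(A j) = (f j z / f N z) * ↑(A N)
  have key : ∀ j : Fin n, ((A j : ℝ) : ℂ) = (f j z / f N z) * ((A N : ℝ) : ℂ) := by
    intro j
    obtain ⟨hdN, hdbarN⟩ := aux_dbar U hU (x N) (hx N) (f N) (hf N) z hz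
    obtain ⟨hdj, hdbarj⟩ := aux_dbar U hU (x j) (hx j) (f j) (hf j) z hz
    set g : ℂ → ℂ := fun w => f j w / f N w with hg
    have hgd : DifferentiableAt ℂ g z := (hquot j).differentiableAt hzn
    have hgdR : DifferentiableAt ℝ g z := hgd.restrictScalars ℝ
    -- Cauchy-Riemann for g
    have hCR : fderiv ℝ g z Complex.I = Complex.I * fderiv ℝ g z 1 := by
      have h1 : fderiv ℝ g z = (fderiv ℂ g z).restrictScalars ℝ :=
        (hgd.hasFDerivAt.restrictScalars ℝ).fderiv
      rw [h1]
      simp only [ContinuousLinearMap.coe_restrictScalars']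
      have : (Complex.I : ℂ) = Complex.I • (1 : ℂ) := by simp
      rw [this, map_smul]
      simp [smul_eq_mul]
    -- f j = g * f N near z
    have heq : f j =ᶠ[nhds z] fun w => g w * f N w := by
      filter_upwards [hzn] with w hw
      rw [hg]
      exact (div_mul_cancel₀ (f j w) (hlast w hw)).symm
    have hfd : fderiv ℝ (f j) z = fderiv ℝ (fun w => g w * f N w) z := heq.fderiv_eq
    have hmul : fderiv ℝ (fun w => g w * f N w) z
        = g z • fderiv ℝ (f N) z + f N z • fderiv ℝ g z := fderiv_mul hgdR hdN
    have h1 : fderiv ℝ (f j) z 1 = g z * fderiv ℝ (f N) z 1 + f N z * fderiv ℝ g z 1 := by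
      rw [hfd, hmul]; simp
    have h2 : fderiv ℝ (f j) z Complex.I
        = g z * fderiv ℝ (f N) z Complex.I + f N z * fderiv ℝ g z Complex.I := by
      rw [hfd, hmul]; simp
    have hcalc : fderiv ℝ (f j) z 1 + Complex.I * fderiv ℝ (f j) z Complex.I
        = g z * (fderiv ℝ (f N) z 1 + Complex.I * fderiv ℝ (f N) z Complex.I) := by
      rw [h1, h2, hCR]
      linear_combination (f N z * fderiv ℝ g z 1) * Complex.I_sq
    rw [← hdbarj, ← hdbarN] at *
    rw [hcalc]
  -- show A N = 0
  have hAN : A N = 0 := by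
    by_contra hANne
    have hANc : ((A N : ℝ) : ℂ) ≠ 0 := by exact_mod_cast hANne
    have hsum : (∑ j, (f j z / f N z) ^ 2) = 0 := by
      have : (∑ j, (f j z / f N z) ^ 2) * (f N z) ^ 2 = ∑ j, (f j z) ^ 2 := by
        rw [Finset.sum_mul]
        refine Finset.sum_congr rfl fun j _ => ?_
        field_simp
      have h0 := hiso z hz
      rw [← this] at h0
      rcases mul_eq_zero.1 h0 with h | h
      · exact h
      · exact absurd (pow_eq_zero_iff (by norm_num) |>.1 h) hfNz
    have hreal : ∀ j, f j z / f N z = ((A j / A N : ℝ) : ℂ) := by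
      intro j
      rw [Complex.ofReal_div]
      rw [eq_div_iff hANc]
      exact (key j).symm
    have hsumR : (∑ j, (A j / A N) ^ 2) = 0 := by
      have : ((∑ j, (A j / A N) ^ 2 : ℝ) : ℂ) = 0 := by
        push_cast
        rw [← hsum]
        exact Finset.sum_congr rfl fun j _ => by rw [hreal j]; norm_cast
      exact_mod_cast this
    have hterm : (A N / A N) ^ 2 = 0 := by
      have := (Finset.sum_eq_zero_iff_of_nonneg
        (fun j _ => sq_nonneg (A j / A N))).1 hsumR N (Finset.mem_univ N)
      exact this
    rw [div_self hANne] at hterm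
    norm_num at hterm
  have := key i₀
  rw [hAN] at this
  simp only [Complex.ofReal_zero, mul_zero, Complex.ofReal_eq_zero] at this
  exact this
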